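/- For any function BWT : Fin n → Σ, the map LF defined by LF(i) = C(BWT[i]) + rank_{BWT[i]}(i), where C(c) = |{j : BWT[j] < c}| and rank_c(i) = |{j < i : BWT[j] = c}|, is a bijection on Fin n. -/
import Mathlib


def finPred {n : ℕ} (i : Fin n) : Fin n :=
  ⟨i.val - 1, Nat.lt_of_le_of_lt (Nat.sub_le _ _) i.isLt⟩

/-- C(c) = number of positions j with BWT[j] < c. -/
def Ccount {n : ℕ} {α : Type*} [LinearOrder α] (B : Fin n → α) (c : α) : ℕ :=
  (Finset.univ.filter (fun j => B j < c)).card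

/-- rank_c(B, i) = number of positions j < i with B[j] = c. -/
def rank {n : ℕ} {α : Type*} [LinearOrder α] (B : Fin n → α) (c : α) (i : Fin n) : ℕ :=
  (Finset.univ.filter (fun j => j < i ∧ B j = c)).card

/-- LF(i) = C(BWT[i]) + rank_{BWT[i]}(BWT, i). -/
def LF {n : ℕ} {α : Type*} [LinearOrder α] (B : Fin n → α) (i : Fin n) : ℕ :=
  Ccount B (B i) + rank B (B i) i

/-- Run heads: positions i with i = 0 or B[i] ≠ B[i−1]. -/
def runHeads {n : ℕ} {α : Type*} [LinearOrder α] (B : Fin n → α) : Finset (Fin n) :=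
  Finset.univ.filter (fun i => i.val = 0 ∨ B i ≠ B (finPred i))

/-- The set of positions lexicographically below (B i, i). -/
def lexBelow {n : ℕ} {α : Type*} [LinearOrder α] (B : Fin n → α) (i : Fin n) : Finset (Fin n) :=
  Finset.univ.filter (fun j => B j < B i ∨ (B j = B i ∧ j < i))

lemma LF_eq_card {n : ℕ} {α : Type*} [LinearOrder α] (B : Fin n → α) (i : Fin n) :
    LF B i = (lexBelow B i).card := by
  classical
  unfold LF Ccount rank lexBelow
  rw [← Finset.card_union_of_disjoint]
  · congr 1
    ext j
    simp only [Finset.mem_union, Finset.mem_filter, Finset.mem_univ, true_and]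
    tauto
  · rw [Finset.disjoint_left]
    intro j hj hj'
    simp only [Finset.mem_filter, Finset.mem_univ, true_and] at hj hj'
    exact absurd hj'.2 (ne_of_lt hj)

lemma LF_lt {n : ℕ} {α : Type*} [LinearOrder α] (B : Fin n → α) (i : Fin n) :
    LF B i < n := by
  classical
  rw [LF_eq_card]
  calc (lexBelow B i).card ≤ (Finset.univ.erase i).card := by
        apply Finset.card_le_card
        intro j hj
        simp only [lexBelow, Finset.mem_filter, Finset.mem_univ, true_and] at hj
        apply Finset.mem_erase.mpr
        refine ⟨?_, Finset.mem_univ j⟩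
        rintro rfl
        rcases hj with h | ⟨_, h⟩ <;> exact lt_irrefl _ h
    _ < Finset.univ.card := by
        apply Finset.card_erase_lt_of_mem (Finset.mem_univ i)
    _ = n := by simp

lemma LF_injective {n : ℕ} {α : Type*} [LinearOrder α] (B : Fin n → α) :
    Function.Injective (LF B) := by
  classical
  -- helper: if (B i, i) <lex (B j, j) then LF i < LF j
  have key : ∀ i j : Fin n, (B i < B j ∨ (B i = B j ∧ i < j)) → LF B i < LF B j := by
    intro i j hij
    rw [LF_eq_card, LF_eq_card]
    apply Finset.card_lt_card
    constructor
    · intro k hk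
      simp only [lexBelow, Finset.mem_filter, Finset.mem_univ, true_and] at hk ⊢
      rcases hk with hk | ⟨hk, hk'⟩ <;> rcases hij with hij | ⟨hij, hij'⟩
      · exact Or.inl (hk.trans hij)
      · exact Or.inl (hij ▸ hk)
      · exact Or.inl (hk.trans_lt hij)
      · exact Or.inr ⟨hk.trans hij, hk'.trans hij'⟩
    · intro hsub
      have : i ∈ lexBelow B j := by
        simp only [lexBelow, Finset.mem_filter, Finset.mem_univ, true_and]
        exact hij
      have := hsub this
      simp only [lexBelow, Finset.mem_filter, Finset.mem_univ, true_and] at this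
      obtain h | h := this
      · exact absurd h (lt_irrefl _)
      · exact absurd h (lt_irrefl _)
  intro i j h
  by_contra hne
  rcases lt_trichotomy (B i) (B j) with hb | hb | hb
  · exact absurd h (ne_of_lt (key i j (Or.inl hb)))
  · rcases lt_or_gt_of_ne hne with hij | hij
    · exact absurd h (ne_of_lt (key i j (Or.inr ⟨hb, hij⟩)))
    · exact absurd h.symm (ne_of_lt (key j i (Or.inr ⟨hb.symm, hij⟩)))
  · exact absurd h.symm (ne_of_lt (key j i (Or.inl hb)))

/-- For any B : Fin n → α, LF is a bijection onto {0,…,n−1}. -/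
theorem stmt5 {n : ℕ} (hn : 1 ≤ n) {α : Type*} [LinearOrder α] [Fintype α]
    (B : Fin n → α) :
    (∀ i : Fin n, LF B i < n) ∧ (∀ m : ℕ, m < n → ∃! i : Fin n, LF B i = m) := by
  refine ⟨LF_lt B, ?_⟩
  set g : Fin n → Fin n := fun i => ⟨LF B i, LF_lt B i⟩ with hg
  have ginj : Function.Injective g := by
    intro i j h
    apply LF_injective B
    exact congrArg Fin.val h
  have gsurj : Function.Surjective g := Finite.surjective_of_injective ginj
  intro m hm
  obtain ⟨i, hi⟩ := gsurj ⟨m, hm⟩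
  refine ⟨i, congrArg Fin.val hi, ?_⟩
  intro j hj
  apply LF_injective B
  rw [hj]
  exact (congrArg Fin.val hi).symm
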